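/- Let $u, u', v, v'$ be vectors with $\gamma \leq \|u\|,\|v\|,\|u'\|,\|v'\| \leq 1$ and suppose $\|u \otimes v - u' \otimes v'\|_F < \delta$ with $\delta < \gamma^2/2$. Write $u = \alpha_1 u' + u^\perp$ and $v = \alpha_2 v' + v^\perp$ with $u^\perp \perp u'$ and $v^\perp \perp v'$. Then $\|u^\perp\| < \sqrt{\delta}$ and $\|v^\perp\| < \sqrt{\delta}$. -/

import Mathlib

/-- If the rank-one matrices `u ⊗ v` and `u' ⊗ v'` are `δ`-close in Frobenius norm, all four
vectors have norms in `[γ, 1]`, and `δ < γ²/2`, then in the orthogonal decompositions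
`u = α₁ u' + u^⊥` and `v = α₂ v' + v^⊥` the perpendicular parts have norm `< √δ`. -/
theorem rank_one_perturbation (m n : ℕ)
    (u up u' : EuclideanSpace ℝ (Fin m)) (v vp v' : EuclideanSpace ℝ (Fin n))
    (α₁ α₂ γ δ : ℝ) (hγ : 0 < γ)
    (hu : γ ≤ ‖u‖) (hu1 : ‖u‖ ≤ 1) (hv : γ ≤ ‖v‖) (hv1 : ‖v‖ ≤ 1)
    (hu' : γ ≤ ‖u'‖) (hu'1 : ‖u'‖ ≤ 1) (hv' : γ ≤ ‖v'‖) (hv'1 : ‖v'‖ ≤ 1)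
    (hδclose : Real.sqrt (∑ i, ∑ j, (u i * v j - u' i * v' j) ^ 2) < δ)
    (hδsmall : δ < γ ^ 2 / 2)
    (hdu : u = α₁ • u' + up) (hou : inner ℝ up u' = (0 : ℝ))
    (hdv : v = α₂ • v' + vp) (hov : inner ℝ vp v' = (0 : ℝ)) :
    ‖up‖ < Real.sqrt δ ∧ ‖vp‖ < Real.sqrt δ := by
  have hδpos : 0 < δ := lt_of_le_of_lt (Real.sqrt_nonneg _) hδclose
  -- inner products as sums
  have hiu : (inner ℝ u u' : ℝ) = ∑ i, u i * u' i := by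
    simp [PiLp.inner_apply, RCLike.inner_apply, mul_comm]
  have hiv : (inner ℝ v v' : ℝ) = ∑ j, v j * v' j := by
    simp [PiLp.inner_apply, RCLike.inner_apply, mul_comm]
  have hnu : ‖u‖ ^ 2 = ∑ i, u i * u i := by
    rw [← real_inner_self_eq_norm_sq]; simp only [PiLp.inner_apply, RCLike.inner_apply, conj_trivial]
  have hnv : ‖v‖ ^ 2 = ∑ j, v j * v j := by
    rw [← real_inner_self_eq_norm_sq]; simp only [PiLp.inner_apply, RCLike.inner_apply, conj_trivial]
  have hnu' : ‖u'‖ ^ 2 = ∑ i, u' i * u' i := by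
    rw [← real_inner_self_eq_norm_sq]; simp only [PiLp.inner_apply, RCLike.inner_apply, conj_trivial]
  have hnv' : ‖v'‖ ^ 2 = ∑ j, v' j * v' j := by
    rw [← real_inner_self_eq_norm_sq]; simp only [PiLp.inner_apply, RCLike.inner_apply, conj_trivial]
  -- expand the Frobenius norm squared
  have hS : (∑ i, ∑ j, (u i * v j - u' i * v' j) ^ 2)
      = ‖u‖ ^ 2 * ‖v‖ ^ 2 - 2 * (inner ℝ u u' : ℝ) * (inner ℝ v v' : ℝ)
        + ‖u'‖ ^ 2 * ‖v'‖ ^ 2 := by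
    rw [hiu, hiv, hnu, hnv, hnu', hnv', mul_assoc, Finset.sum_mul_sum, Finset.sum_mul_sum,
      Finset.sum_mul_sum, Finset.mul_sum, ← Finset.sum_sub_distrib, ← Finset.sum_add_distrib]
    refine Finset.sum_congr rfl fun i _ => ?_
    rw [Finset.mul_sum, ← Finset.sum_sub_distrib, ← Finset.sum_add_distrib]
    refine Finset.sum_congr rfl fun j _ => ?_
    ring
  -- decomposition identities
  have hou' : (inner ℝ u' up : ℝ) = 0 := by rw [real_inner_comm]; exact hou
  have hov' : (inner ℝ v' vp : ℝ) = 0 := by rw [real_inner_comm]; exact hov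
  have hu2 : ‖u‖ ^ 2 = α₁ ^ 2 * ‖u'‖ ^ 2 + ‖up‖ ^ 2 := by
    rw [hdu, norm_add_sq_real, norm_smul, inner_smul_left]
    simp [hou', mul_pow, abs_mul_abs_self, sq_abs]
  have hv2 : ‖v‖ ^ 2 = α₂ ^ 2 * ‖v'‖ ^ 2 + ‖vp‖ ^ 2 := by
    rw [hdv, norm_add_sq_real, norm_smul, inner_smul_left]
    simp [hov', mul_pow, abs_mul_abs_self, sq_abs]
  have hiu2 : (inner ℝ u u' : ℝ) = α₁ * ‖u'‖ ^ 2 := by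
    rw [hdu, inner_add_left, inner_smul_left, real_inner_self_eq_norm_sq, hou]
    simp
  have hiv2 : (inner ℝ v v' : ℝ) = α₂ * ‖v'‖ ^ 2 := by
    rw [hdv, inner_add_left, inner_smul_left, real_inner_self_eq_norm_sq, hov]
    simp
  set S := ∑ i, ∑ j, (u i * v j - u' i * v' j) ^ 2 with hSdef
  have hSlt : S < δ ^ 2 := (Real.sqrt_lt' hδpos).mp hδclose
  have hSe1 : S = (α₁ * α₂ - 1) ^ 2 * (‖u'‖ ^ 2 * ‖v'‖ ^ 2)
      + α₁ ^ 2 * (‖u'‖ ^ 2 * ‖vp‖ ^ 2) + ‖up‖ ^ 2 * (α₂ ^ 2 * ‖v'‖ ^ 2 + ‖vp‖ ^ 2) := by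
    rw [hS, hiu2, hiv2, hu2, hv2]; ring
  have hSe2 : S = (α₁ * α₂ - 1) ^ 2 * (‖u'‖ ^ 2 * ‖v'‖ ^ 2)
      + α₂ ^ 2 * (‖v'‖ ^ 2 * ‖up‖ ^ 2) + ‖vp‖ ^ 2 * (α₁ ^ 2 * ‖u'‖ ^ 2 + ‖up‖ ^ 2) := by
    rw [hS, hiu2, hiv2, hu2, hv2]; ring
  have key1 : ‖up‖ ^ 2 * ‖v‖ ^ 2 ≤ S := by
    rw [hSe1, hv2]
    have h1 : 0 ≤ (α₁ * α₂ - 1) ^ 2 * (‖u'‖ ^ 2 * ‖v'‖ ^ 2) := by positivity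
    have h2 : 0 ≤ α₁ ^ 2 * (‖u'‖ ^ 2 * ‖vp‖ ^ 2) := by positivity
    linarith
  have key2 : ‖vp‖ ^ 2 * ‖u‖ ^ 2 ≤ S := by
    rw [hSe2, hu2]
    have h1 : 0 ≤ (α₁ * α₂ - 1) ^ 2 * (‖u'‖ ^ 2 * ‖v'‖ ^ 2) := by positivity
    have h2 : 0 ≤ α₂ ^ 2 * (‖v'‖ ^ 2 * ‖up‖ ^ 2) := by positivity
    linarith
  have hγv : γ ^ 2 ≤ ‖v‖ ^ 2 := pow_le_pow_left₀ hγ.le hv 2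
  have hγu : γ ^ 2 ≤ ‖u‖ ^ 2 := pow_le_pow_left₀ hγ.le hu 2
  have hδγ : δ < γ ^ 2 := lt_of_lt_of_le hδsmall (by linarith [sq_nonneg γ])
  have hδ2 : δ ^ 2 < δ * γ ^ 2 := by
    rw [sq]; exact mul_lt_mul_of_pos_left hδγ hδpos
  have hup2 : ‖up‖ ^ 2 < δ := by
    have h3 : ‖up‖ ^ 2 * γ ^ 2 < δ * γ ^ 2 :=
      calc ‖up‖ ^ 2 * γ ^ 2 ≤ ‖up‖ ^ 2 * ‖v‖ ^ 2 :=
            mul_le_mul_of_nonneg_left hγv (sq_nonneg _)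
        _ ≤ S := key1
        _ < δ ^ 2 := hSlt
        _ < δ * γ ^ 2 := hδ2
    exact lt_of_mul_lt_mul_right h3 (sq_nonneg γ)
  have hvp2 : ‖vp‖ ^ 2 < δ := by
    have h3 : ‖vp‖ ^ 2 * γ ^ 2 < δ * γ ^ 2 :=
      calc ‖vp‖ ^ 2 * γ ^ 2 ≤ ‖vp‖ ^ 2 * ‖u‖ ^ 2 :=
            mul_le_mul_of_nonneg_left hγu (sq_nonneg _)
        _ ≤ S := key2
        _ < δ ^ 2 := hSlt
        _ < δ * γ ^ 2 := hδ2
    exact lt_of_mul_lt_mul_right h3 (sq_nonneg γ)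
  exact ⟨(Real.lt_sqrt (norm_nonneg _)).mpr hup2, (Real.lt_sqrt (norm_nonneg _)).mpr hvp2⟩
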